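/- Let k be a field of characteristic 2, J the 4×4 antidiagonal matrix of ones, 𝔰𝔭₄ = {M : Mᵀ*J + J*M = 0}, and v = 1 + E₀₃ (so v⁻¹ = v). Then there exists M ∈ 𝔰𝔭₄ (for instance M = E₃₀, the matrix unit in position (3,0)) such that (v*M*v) 0 0 + (v*M*v) 2 2 ≠ M 0 0 + M 2 2. Thus the semisimple covector X*_s : M ↦ M₀₀ + M₂₂ is NOT fixed by the coadjoint action of v. -/

import Mathlib

theorem stmt_12 (k : Type*) [Field k] [CharP k 2]
    (J : Matrix (Fin 4) (Fin 4) k)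
    (hJ : ∀ i j, J i j = if (i : ℕ) + (j : ℕ) = 3 then 1 else 0)
    (v : Matrix (Fin 4) (Fin 4) k)
    (hv : v = 1 + Matrix.single 0 3 1) :
    ∃ M : Matrix (Fin 4) (Fin 4) k,
      M.transpose * J + J * M = 0 ∧
      (v * M * v) 0 0 + (v * M * v) 2 2 ≠ M 0 0 + M 2 2 := by
  refine ⟨Matrix.single 3 0 1, ?_, ?_⟩
  · ext i j
    fin_cases i <;> fin_cases j <;>
      simp [Matrix.mul_apply, Fin.sum_univ_four, hJ, Matrix.single,
        Matrix.transpose_apply, Matrix.of_apply, CharTwo.add_self_eq_zero] <;> decide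
  · subst hv
    simp [Matrix.mul_apply, Fin.sum_univ_four, Matrix.single,
      Matrix.one_apply, Matrix.of_apply]
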